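/- Identification of the indirect standardization parameter: Assume no unmeasured confounding. Let (A*, π*) be a stochastic intervention with π*(b|·) = π(b|·) for every b ∈ Fin m (attempts are randomly reassigned according to the observed propensity of players given covariates). Let m_P : 𝒳 → ℝ be measurable with m_P(X) P-a.s. equal to E[Y | σ(X)]. Fix a ∈ Fin m and a measurable set 𝒳' ⊆ 𝒳 with P(A = a, X ∈ 𝒳') > 0. Then E[f(X, A*, U) | A = a, X ∈ 𝒳'] = E[m_P(X) | A = a, X ∈ 𝒳']. -/

import Mathlib

open MeasureTheory ProbabilityTheory
open scoped ENNReal NNReal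

lemma my_integrable_of_bdd {Ω : Type*} [MeasurableSpace Ω] {P : Measure Ω}
    [IsFiniteMeasure P] {g : Ω → ℝ} (hg : Measurable g) (c : ℝ) (h : ∀ ω, |g ω| ≤ c) :
    Integrable g P :=
  Integrable.mono' (integrable_const c) hg.aestronglyMeasurable
    (Filter.Eventually.of_forall (by simpa [Real.norm_eq_abs] using h))

lemma my_pullout {Ω : Type*} {m' mΩ : MeasurableSpace Ω} (hm' : m' ≤ mΩ)
    (P : Measure Ω) [IsProbabilityMeasure P] {g h : Ω → ℝ}
    (hg : StronglyMeasurable[m'] g) (hh : Integrable h P)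
    (hgh : Integrable (fun ω => g ω * h ω) P) :
    ∫ ω, g ω * h ω ∂P = ∫ ω, g ω * (P[h|m']) ω ∂P := by
  have h1 : P[fun ω => g ω * h ω|m'] =ᵐ[P] fun ω => g ω * (P[h|m']) ω :=
    condExp_mul_of_stronglyMeasurable_left hg hgh hh
  rw [← integral_condExp hm' (f := fun ω => g ω * h ω)]
  exact integral_congr_ae h1

lemma my_integral_eq_of_rect {Ω 𝒳 𝒰 : Type*} [MeasurableSpace Ω] [MeasurableSpace 𝒳]
    [MeasurableSpace 𝒰] (P : Measure Ω) [IsProbabilityMeasure P]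
    {X : Ω → 𝒳} {U : Ω → 𝒰} (hX : Measurable X) (hU : Measurable U)
    {w₁ w₂ : Ω → ℝ} (hw₁ : Measurable w₁) (hw₂ : Measurable w₂)
    (hw₁0 : ∀ ω, 0 ≤ w₁ ω) (hw₂0 : ∀ ω, 0 ≤ w₂ ω)
    (hw₁1 : ∀ ω, w₁ ω ≤ 1) (hw₂1 : ∀ ω, w₂ ω ≤ 1)
    (hrect : ∀ s t, MeasurableSet s → MeasurableSet t →
      ∫ ω in X ⁻¹' s ∩ U ⁻¹' t, w₁ ω ∂P = ∫ ω in X ⁻¹' s ∩ U ⁻¹' t, w₂ ω ∂P)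
    (F : 𝒳 → 𝒰 → ℝ) (hF : Measurable fun p : 𝒳 × 𝒰 => F p.1 p.2)
    (CF : ℝ) (hFb : ∀ x u, |F x u| ≤ CF) :
    ∫ ω, w₁ ω * F (X ω) (U ω) ∂P = ∫ ω, w₂ ω * F (X ω) (U ω) ∂P := by
  have hXU : Measurable fun ω => (X ω, U ω) := hX.prodMk hU
  -- the two pushforward measures
  set ν₁ : Measure (𝒳 × 𝒰) :=
    Measure.map (fun ω => (X ω, U ω)) (P.withDensity fun ω => ((w₁ ω).toNNReal : ℝ≥0∞)) with hν₁
  set ν₂ : Measure (𝒳 × 𝒰) :=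
    Measure.map (fun ω => (X ω, U ω)) (P.withDensity fun ω => ((w₂ ω).toNNReal : ℝ≥0∞)) with hν₂
  have key : ∀ (w : Ω → ℝ), Measurable w → (∀ ω, 0 ≤ w ω) → (∀ ω, w ω ≤ 1) →
      ∀ s t, MeasurableSet s → MeasurableSet t →
      Measure.map (fun ω => (X ω, U ω)) (P.withDensity fun ω => ((w ω).toNNReal : ℝ≥0∞))
        (s ×ˢ t) = ENNReal.ofReal (∫ ω in X ⁻¹' s ∩ U ⁻¹' t, w ω ∂P) := by
    intro w hw hw0 hw1 s t hs ht
    rw [Measure.map_apply hXU (hs.prod ht)]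
    have hpre : (fun ω => (X ω, U ω)) ⁻¹' (s ×ˢ t) = X ⁻¹' s ∩ U ⁻¹' t := by
      ext ω; simp [Set.mem_prod]
    rw [hpre, withDensity_apply _ ((hX hs).inter (hU ht))]
    have : ∀ ω, ((w ω).toNNReal : ℝ≥0∞) = ENNReal.ofReal (w ω) := fun ω => rfl
    simp_rw [this]
    rw [← ofReal_integral_eq_lintegral_ofReal
      ((my_integrable_of_bdd hw 1 (fun ω => abs_le.mpr ⟨by linarith [hw0 ω], hw1 ω⟩)).restrict)
      (Filter.Eventually.of_forall hw0)]
  have hfin : ∀ (w : Ω → ℝ), Measurable w → (∀ ω, 0 ≤ w ω) → (∀ ω, w ω ≤ 1) →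
      IsFiniteMeasure (Measure.map (fun ω => (X ω, U ω))
        (P.withDensity fun ω => ((w ω).toNNReal : ℝ≥0∞))) := by
    intro w hw hw0 hw1
    constructor
    rw [Measure.map_apply hXU MeasurableSet.univ, Set.preimage_univ, withDensity_apply _ MeasurableSet.univ, Measure.restrict_univ]
    calc ∫⁻ ω, ((w ω).toNNReal : ℝ≥0∞) ∂P ≤ ∫⁻ _, 1 ∂P := by
          refine lintegral_mono fun ω => ?_
          simpa using ENNReal.ofReal_le_one.mpr (hw1 ω)
      _ < ⊤ := by simp
  have h1 : IsFiniteMeasure ν₁ := hfin w₁ hw₁ hw₁0 hw₁1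
  have heq : ν₁ = ν₂ := by
    refine MeasureTheory.ext_of_generate_finite _ generateFrom_prod.symm isPiSystem_prod ?_ ?_
    · rintro S ⟨s, hs, t, ht, rfl⟩
      rw [hν₁, hν₂, key w₁ hw₁ hw₁0 hw₁1 s t hs ht, key w₂ hw₂ hw₂0 hw₂1 s t hs ht,
        hrect s t hs ht]
    · have := key w₁ hw₁ hw₁0 hw₁1 Set.univ Set.univ MeasurableSet.univ MeasurableSet.univ
      have h2 := key w₂ hw₂ hw₂0 hw₂1 Set.univ Set.univ MeasurableSet.univ MeasurableSet.univ
      rw [Set.univ_prod_univ] at this h2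
      rw [hν₁, hν₂, this, h2, hrect _ _ MeasurableSet.univ MeasurableSet.univ]
  have hrep : ∀ (w : Ω → ℝ), Measurable w → (∀ ω, 0 ≤ w ω) →
      ∫ p, F p.1 p.2 ∂(Measure.map (fun ω => (X ω, U ω))
        (P.withDensity fun ω => ((w ω).toNNReal : ℝ≥0∞)))
        = ∫ ω, w ω * F (X ω) (U ω) ∂P := by
    intro w hw hw0
    rw [integral_map hXU.aemeasurable hF.aestronglyMeasurable,
      integral_withDensity_eq_integral_smul (hw.real_toNNReal)]
    refine integral_congr_ae (Filter.Eventually.of_forall fun ω => ?_)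
    simp [NNReal.smul_def, Real.coe_toNNReal _ (hw0 ω)]
  rw [← hrep w₁ hw₁ hw₁0, ← hrep w₂ hw₂ hw₂0, ← hν₁, ← hν₂, heq]

/-- Identification of the indirect standardization parameter. -/
theorem identification_indirect_standardization
    {Ω 𝒳 𝒰 : Type*} [MeasurableSpace Ω] [StandardBorelSpace Ω]
    [MeasurableSpace 𝒳] [StandardBorelSpace 𝒳]
    [MeasurableSpace 𝒰] [StandardBorelSpace 𝒰]
    (P : Measure Ω) [IsProbabilityMeasure P]
    (m : ℕ) (hm : 1 ≤ m)
    (X : Ω → 𝒳) (U : Ω → 𝒰) (A : Ω → Fin m)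
    (hX : Measurable X) (hU : Measurable U) (hA : Measurable A)
    (f : 𝒳 → Fin m → 𝒰 → ℝ)
    (hf : Measurable fun p : 𝒳 × Fin m × 𝒰 => f p.1 p.2.1 p.2.2)
    (C : ℝ) (hfbdd : ∀ x b u, |f x b u| ≤ C)
    -- propensity scores: π(b|X) is a version of E[1{A=b} | σ(X)]
    (π : Fin m → 𝒳 → ℝ) (hπmeas : ∀ b, Measurable (π b))
    (hπ01 : ∀ b x, 0 ≤ π b x ∧ π b x ≤ 1)
    (hπ : ∀ b, (fun ω => π b (X ω)) =ᵐ[P]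
      P[fun ω => (if A ω = b then (1 : ℝ) else 0) | MeasurableSpace.comap X inferInstance])
    -- no unmeasured confounding: A ⫫ U | σ(X)
    (hNUC : CondIndepFun (MeasurableSpace.comap X inferInstance) hX.comap_le A U P)
    -- stochastic intervention A* whose intervention distribution is π itself:
    -- π(b|X) is a version of E[1{A*=b} | σ(X, A, U)]
    (Astar : Ω → Fin m) (hAstar : Measurable Astar)
    (hπstar : ∀ b, (fun ω => π b (X ω)) =ᵐ[P]
      P[fun ω => (if Astar ω = b then (1 : ℝ) else 0) |
        MeasurableSpace.comap (fun ω => (X ω, A ω, U ω)) inferInstance])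
    -- overall outcome regression m_P : X → ℝ, a version of E[Y | σ(X)]
    (mP : 𝒳 → ℝ) (hmPmeas : Measurable mP)
    (hmP : (fun ω => mP (X ω)) =ᵐ[P]
      P[fun ω => f (X ω) (A ω) (U ω) | MeasurableSpace.comap X inferInstance])
    -- focal player and reference population
    (a : Fin m) (𝒳' : Set 𝒳) (h𝒳' : MeasurableSet 𝒳')
    (E : Set Ω) (hE : E = {ω | A ω = a} ∩ {ω | X ω ∈ 𝒳'})
    (hPE : 0 < P E) :
    (∫ ω in E, f (X ω) (Astar ω) (U ω) ∂P) / (P E).toReal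
      = (∫ ω in E, mP (X ω) ∂P) / (P E).toReal := by
  classical
  have hmX_le : MeasurableSpace.comap X inferInstance ≤ _ := hX.comap_le
  have hφ : Measurable fun ω => (X ω, A ω, U ω) := hX.prodMk (hA.prodMk hU)
  have hmG_le : MeasurableSpace.comap (fun ω => (X ω, A ω, U ω)) inferInstance ≤ _ :=
    hφ.comap_le
  -- nonemptiness and 0 ≤ C
  have hEne : E.Nonempty := by
    rcases Set.eq_empty_or_nonempty E with h | h
    · rw [h] at hPE; simp at hPE
    · exact h
  obtain ⟨ω₀, hω₀⟩ := hEne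
  have hC0 : 0 ≤ C := le_trans (abs_nonneg _) (hfbdd (X ω₀) a (U ω₀))
  -- measurability of components
  have hgmeas : ∀ b : Fin m, Measurable fun ω => f (X ω) b (U ω) := fun b =>
    hf.comp (hX.prodMk (measurable_const.prodMk hU))
  have hYmeas : Measurable fun ω => f (X ω) (A ω) (U ω) := hf.comp hφ
  have hEmeas : MeasurableSet E := by
    rw [hE]; exact (hA (measurableSet_singleton a)).inter (hX h𝒳')
  -- strong measurability with respect to mX of composites with X
  have hmXmeas : ∀ {g : 𝒳 → ℝ}, Measurable g →
      StronglyMeasurable[MeasurableSpace.comap X inferInstance] fun ω => g (X ω) :=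
    fun {g} hg => Measurable.stronglyMeasurable (fun s hs => ⟨g ⁻¹' s, hg hs, rfl⟩)
  -- indicator rewriting for set integrals over E
  have hindE : ∀ v : Ω → ℝ, ∫ ω in E, v ω ∂P
      = ∫ ω, (if A ω = a then (1:ℝ) else 0) * ((if X ω ∈ 𝒳' then (1:ℝ) else 0) * v ω) ∂P := by
    intro v
    rw [← integral_indicator hEmeas]
    refine integral_congr_ae (Filter.Eventually.of_forall fun ω => ?_)
    by_cases h1 : A ω = a <;> by_cases h2 : X ω ∈ 𝒳' <;>
      simp [hE, Set.indicator_apply, h1, h2]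
  -- conditional independence: rectangle computation
  have hcondind := (condIndepFun_iff_condExp_inter_preimage_eq_mul
    (m' := MeasurableSpace.comap X inferInstance) (hm' := hX.comap_le)
    (μ := P) hA hU).mp hNUC
  have habs1 : ∀ {p : Prop} [Decidable p], |if p then (1:ℝ) else 0| ≤ 1 := by
    intro p _; split <;> simp
  have habsπ : ∀ (b : Fin m) (x : 𝒳), |π b x| ≤ 1 := fun b x =>
    abs_le.mpr ⟨by linarith [(hπ01 b x).1], (hπ01 b x).2⟩
  have habs_mul : ∀ {u v : ℝ}, |u| ≤ 1 → |v| ≤ 1 → |u * v| ≤ 1 := by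
    intro u v hu hv
    rw [abs_mul]
    nlinarith [abs_nonneg u, abs_nonneg v]
  have hrect_key : ∀ (c d : Fin m) (s : Set 𝒳) (t : Set 𝒰),
      MeasurableSet s → MeasurableSet t →
      ∫ ω in X ⁻¹' s ∩ U ⁻¹' t, (if A ω = c then (1:ℝ) else 0) * π d (X ω) ∂P
        = ∫ ω, ((if X ω ∈ s then (1:ℝ) else 0) * π c (X ω) * π d (X ω)) *
            (P⟦U ⁻¹' t | MeasurableSpace.comap X inferInstance⟧) ω ∂P := by
    intro c d s t hs ht
    have hgmeas' : Measurable fun x : 𝒳 => (if x ∈ s then (1:ℝ) else 0) * π d x :=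
      (Measurable.ite hs measurable_const measurable_const).mul (hπmeas d)
    have hgb : ∀ ω, |(if X ω ∈ s then (1:ℝ) else 0) * π d (X ω)| ≤ 1 := fun ω =>
      habs_mul habs1 (habsπ d (X ω))
    have hhmeas : Measurable fun ω => (if A ω = c then (1:ℝ) else 0) *
        (if U ω ∈ t then (1:ℝ) else 0) :=
      ((Measurable.ite (hA (measurableSet_singleton c)) measurable_const
        measurable_const)).mul (Measurable.ite (hU ht) measurable_const measurable_const)
    have hhint : Integrable (fun ω => (if A ω = c then (1:ℝ) else 0) *
        (if U ω ∈ t then (1:ℝ) else 0)) P :=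
      my_integrable_of_bdd hhmeas 1 (fun ω => habs_mul habs1 habs1)
    have hghint : Integrable (fun ω => ((if X ω ∈ s then (1:ℝ) else 0) * π d (X ω)) *
        ((if A ω = c then (1:ℝ) else 0) * (if U ω ∈ t then (1:ℝ) else 0))) P :=
      my_integrable_of_bdd ((hgmeas'.comp hX).mul hhmeas) 1
        (fun ω => habs_mul (hgb ω) (habs_mul habs1 habs1))
    have step1 : ∫ ω in X ⁻¹' s ∩ U ⁻¹' t, (if A ω = c then (1:ℝ) else 0) * π d (X ω) ∂P
        = ∫ ω, ((if X ω ∈ s then (1:ℝ) else 0) * π d (X ω)) *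
            ((if A ω = c then (1:ℝ) else 0) * (if U ω ∈ t then (1:ℝ) else 0)) ∂P := by
      rw [← integral_indicator ((hX hs).inter (hU ht))]
      refine integral_congr_ae (Filter.Eventually.of_forall fun ω => ?_)
      by_cases h1 : X ω ∈ s <;> by_cases h2 : U ω ∈ t <;>
        simp [Set.indicator_apply, h1, h2]
    have step2 := my_pullout hmX_le P (g := fun ω => (if X ω ∈ s then (1:ℝ) else 0) * π d (X ω))
      (h := fun ω => (if A ω = c then (1:ℝ) else 0) * (if U ω ∈ t then (1:ℝ) else 0))
      (hmXmeas hgmeas') hhint hghint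
    -- identify the conditional expectation of h
    have hh_eq : (fun ω => (if A ω = c then (1:ℝ) else 0) * (if U ω ∈ t then (1:ℝ) else 0))
        = Set.indicator (A ⁻¹' {c} ∩ U ⁻¹' t) (fun _ => (1:ℝ)) := by
      funext ω
      by_cases h1 : A ω = c <;> by_cases h2 : U ω ∈ t <;>
        simp [Set.indicator_apply, h1, h2]
    have hA_eq : (fun ω => (if A ω = c then (1:ℝ) else 0))
        = Set.indicator (A ⁻¹' {c}) (fun _ => (1:ℝ)) := by
      funext ω
      by_cases h1 : A ω = c <;> simp [Set.indicator_apply, h1]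
    have hcond : P[fun ω => (if A ω = c then (1:ℝ) else 0) * (if U ω ∈ t then (1:ℝ) else 0)
          | MeasurableSpace.comap X inferInstance]
        =ᵐ[P] fun ω => π c (X ω) * (P⟦U ⁻¹' t | MeasurableSpace.comap X inferInstance⟧) ω := by
      rw [hh_eq]
      have h3 := hcondind {c} t (measurableSet_singleton c) ht
      have h4 := hπ c
      rw [hA_eq] at h4
      filter_upwards [h3, h4] with ω hω h4ω
      rw [hω, ← h4ω]
    rw [step1, step2]
    refine integral_congr_ae ?_
    filter_upwards [hcond] with ω hω
    rw [hω]
    ring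
  -- generic bound helpers
  have hbdd_prod : ∀ {u v : ℝ}, |u| ≤ 1 → |v| ≤ C → |u * v| ≤ C := by
    intro u v hu hv
    rw [abs_mul]
    nlinarith [abs_nonneg u, abs_nonneg v]
  have hsum_pt : ∀ (B : Ω → Fin m) (ω : Ω),
      (∑ b : Fin m, (if B ω = b then (1:ℝ) else 0) * f (X ω) b (U ω))
        = f (X ω) (B ω) (U ω) := by
    intro B ω
    simp [boole_mul, Finset.sum_ite_eq]
  -- L1: expand the A*-integral as a sum
  have hImeas : ∀ (B : Ω → Fin m) (hB : Measurable B) (b : Fin m),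
      Measurable (fun ω => (if B ω = b then (1:ℝ) else 0)) := fun B hB b =>
    Measurable.ite (hB (measurableSet_singleton b)) measurable_const measurable_const
  have hIg_int : ∀ (B : Ω → Fin m) (hB : Measurable B) (b : Fin m),
      Integrable (fun ω => (if B ω = b then (1:ℝ) else 0) * f (X ω) b (U ω)) P :=
    fun B hB b => my_integrable_of_bdd ((hImeas B hB b).mul (hgmeas b)) C
      (fun ω => hbdd_prod habs1 (hfbdd _ _ _))
  have hL1 : ∫ ω in E, f (X ω) (Astar ω) (U ω) ∂P
      = ∑ b : Fin m, ∫ ω in E, (if Astar ω = b then (1:ℝ) else 0) * f (X ω) b (U ω) ∂P := by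
    rw [← integral_finset_sum _ (fun b _ => (hIg_int Astar hAstar b).integrableOn)]
    refine integral_congr_ae (Filter.Eventually.of_forall fun ω => ?_)
    exact (hsum_pt Astar ω).symm
  -- E is measurable w.r.t. the σ-algebra generated by (X, A, U)
  have hE_mG : MeasurableSet[MeasurableSpace.comap (fun ω => (X ω, A ω, U ω)) inferInstance] E := by
    refine ⟨𝒳' ×ˢ ({a} ×ˢ (Set.univ : Set 𝒰)),
      h𝒳'.prod ((measurableSet_singleton a).prod MeasurableSet.univ), ?_⟩
    rw [hE]; ext ω; simp [Set.mem_prod]; tauto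
  have hg_mG : ∀ b : Fin m,
      StronglyMeasurable[MeasurableSpace.comap (fun ω => (X ω, A ω, U ω)) inferInstance]
        (fun ω => f (X ω) b (U ω)) := by
    intro b
    refine Measurable.stronglyMeasurable (fun s hs => ?_)
    refine ⟨(fun p : 𝒳 × Fin m × 𝒰 => f p.1 b p.2.2) ⁻¹' s, ?_, rfl⟩
    exact (hf.comp (measurable_fst.prodMk
      (measurable_const.prodMk (measurable_snd.comp measurable_snd)))) hs
  -- L2: replace the indicator of A* by the propensity
  have hL2 : ∀ b : Fin m, ∫ ω in E, (if Astar ω = b then (1:ℝ) else 0) * f (X ω) b (U ω) ∂P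
      = ∫ ω in E, π b (X ω) * f (X ω) b (U ω) ∂P := by
    intro b
    have hint1 : Integrable (fun ω => f (X ω) b (U ω) * (if Astar ω = b then (1:ℝ) else 0)) P :=
      (hIg_int Astar hAstar b).congr
        (Filter.Eventually.of_forall fun ω => (mul_comm _ _))
    have hIstar : Integrable (fun ω => (if Astar ω = b then (1:ℝ) else 0)) P :=
      my_integrable_of_bdd (hImeas Astar hAstar b) 1 (fun ω => habs1)
    have hce : P[fun ω => f (X ω) b (U ω) * (if Astar ω = b then (1:ℝ) else 0)
          | MeasurableSpace.comap (fun ω => (X ω, A ω, U ω)) inferInstance]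
        =ᵐ[P] fun ω => f (X ω) b (U ω) *
          (P[fun ω => (if Astar ω = b then (1:ℝ) else 0)
            | MeasurableSpace.comap (fun ω => (X ω, A ω, U ω)) inferInstance]) ω :=
      condExp_mul_of_stronglyMeasurable_left (μ := P) (hg_mG b) hint1 hIstar
    calc ∫ ω in E, (if Astar ω = b then (1:ℝ) else 0) * f (X ω) b (U ω) ∂P
        = ∫ ω in E, f (X ω) b (U ω) * (if Astar ω = b then (1:ℝ) else 0) ∂P :=
          integral_congr_ae (Filter.Eventually.of_forall fun ω => mul_comm _ _)
      _ = ∫ ω in E, (P[fun ω => f (X ω) b (U ω) * (if Astar ω = b then (1:ℝ) else 0)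
            | MeasurableSpace.comap (fun ω => (X ω, A ω, U ω)) inferInstance]) ω ∂P :=
          (setIntegral_condExp hmG_le hint1 hE_mG).symm
      _ = ∫ ω in E, π b (X ω) * f (X ω) b (U ω) ∂P := by
          refine setIntegral_congr_ae hEmeas ?_
          filter_upwards [hce, hπstar b] with ω h1 h2 _
          rw [h1, ← h2]
          ring
  -- middle step: swap roles of a and b using conditional independence
  have hw_meas : ∀ (c d : Fin m), Measurable fun ω => (if A ω = c then (1:ℝ) else 0) * π d (X ω) :=
    fun c d => (hImeas A hA c).mul ((hπmeas d).comp hX)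
  have hw0 : ∀ (c d : Fin m) (ω : Ω), 0 ≤ (if A ω = c then (1:ℝ) else 0) * π d (X ω) := by
    intro c d ω
    have := (hπ01 d (X ω)).1
    split <;> nlinarith
  have hw1 : ∀ (c d : Fin m) (ω : Ω), (if A ω = c then (1:ℝ) else 0) * π d (X ω) ≤ 1 := by
    intro c d ω
    have h1 := (hπ01 d (X ω)).1
    have h2 := (hπ01 d (X ω)).2
    split <;> nlinarith
  have hFmeas : ∀ b : Fin m, Measurable fun p : 𝒳 × 𝒰 =>
      (if p.1 ∈ 𝒳' then (1:ℝ) else 0) * f p.1 b p.2 := by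
    intro b
    refine (Measurable.ite (measurable_fst h𝒳') measurable_const measurable_const).mul ?_
    exact hf.comp (measurable_fst.prodMk (measurable_const.prodMk measurable_snd))
  have hMid : ∀ b : Fin m,
      ∫ ω, ((if A ω = a then (1:ℝ) else 0) * π b (X ω)) *
        ((if X ω ∈ 𝒳' then (1:ℝ) else 0) * f (X ω) b (U ω)) ∂P
      = ∫ ω, ((if A ω = b then (1:ℝ) else 0) * π a (X ω)) *
        ((if X ω ∈ 𝒳' then (1:ℝ) else 0) * f (X ω) b (U ω)) ∂P := by
    intro b
    refine my_integral_eq_of_rect P hX hU (hw_meas a b) (hw_meas b a)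
      (hw0 a b) (hw0 b a) (hw1 a b) (hw1 b a) ?_
      (fun x u => (if x ∈ 𝒳' then (1:ℝ) else 0) * f x b u) (hFmeas b) C
      (fun x u => hbdd_prod habs1 (hfbdd _ _ _))
    intro s t hs ht
    rw [hrect_key a b s t hs ht, hrect_key b a s t hs ht]
    refine integral_congr_ae (Filter.Eventually.of_forall fun ω => ?_)
    ring
  -- the L-side in canonical form
  have hL : ∫ ω in E, f (X ω) (Astar ω) (U ω) ∂P
      = ∑ b : Fin m, ∫ ω, ((if A ω = a then (1:ℝ) else 0) * π b (X ω)) *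
          ((if X ω ∈ 𝒳' then (1:ℝ) else 0) * f (X ω) b (U ω)) ∂P := by
    rw [hL1]
    refine Finset.sum_congr rfl fun b _ => ?_
    rw [hL2 b, hindE (fun ω => π b (X ω) * f (X ω) b (U ω))]
    refine integral_congr_ae (Filter.Eventually.of_forall fun ω => ?_)
    ring
  -- R-side
  have hmPint : Integrable (fun ω => mP (X ω)) P := integrable_condExp.congr hmP.symm
  have hI'mP_int : Integrable (fun ω => (if X ω ∈ 𝒳' then (1:ℝ) else 0) * mP (X ω)) P :=
    hmPint.bdd_mul (Measurable.ite (hX h𝒳') measurable_const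
      measurable_const).aestronglyMeasurable (Filter.Eventually.of_forall (fun ω => by rw [Real.norm_eq_abs]; exact habs1) : ∀ᵐ ω ∂P, _ ≤ (1:ℝ))
  have hIa_int : Integrable (fun ω => (if A ω = a then (1:ℝ) else 0)) P :=
    my_integrable_of_bdd (hImeas A hA a) 1 (fun ω => habs1)
  have hqIa_int : Integrable
      (fun ω => ((if X ω ∈ 𝒳' then (1:ℝ) else 0) * mP (X ω)) * (if A ω = a then (1:ℝ) else 0)) P := by
    refine (hI'mP_int.bdd_mul (hImeas A hA a).aestronglyMeasurable
      (Filter.Eventually.of_forall (fun ω => by rw [Real.norm_eq_abs]; exact habs1) : ∀ᵐ ω ∂P, _ ≤ (1:ℝ))).congr ?_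
    exact Filter.Eventually.of_forall fun ω => mul_comm _ _
  have hR1 : ∫ ω in E, mP (X ω) ∂P
      = ∫ ω, ((if X ω ∈ 𝒳' then (1:ℝ) else 0) * mP (X ω)) * (if A ω = a then (1:ℝ) else 0) ∂P := by
    rw [hindE (fun ω => mP (X ω))]
    refine integral_congr_ae (Filter.Eventually.of_forall fun ω => ?_)
    ring
  have hR2 : ∫ ω, ((if X ω ∈ 𝒳' then (1:ℝ) else 0) * mP (X ω)) * (if A ω = a then (1:ℝ) else 0) ∂P
      = ∫ ω, ((if X ω ∈ 𝒳' then (1:ℝ) else 0) * π a (X ω)) * mP (X ω) ∂P := by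
    rw [my_pullout hmX_le P
      (g := fun ω => (if X ω ∈ 𝒳' then (1:ℝ) else 0) * mP (X ω))
      (h := fun ω => (if A ω = a then (1:ℝ) else 0))
      (hmXmeas (g := fun x : 𝒳 => (if x ∈ 𝒳' then (1:ℝ) else 0) * mP x) ((Measurable.ite h𝒳' measurable_const measurable_const).mul hmPmeas))
      hIa_int hqIa_int]
    refine integral_congr_ae ?_
    filter_upwards [hπ a] with ω hω
    rw [← hω]
    ring
  -- replace mP ∘ X by the conditional expectation of Y and pull out
  have hYint : Integrable (fun ω => f (X ω) (A ω) (U ω)) P :=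
    my_integrable_of_bdd hYmeas C (fun ω => hfbdd _ _ _)
  have hra_meas : Measurable fun x : 𝒳 => (if x ∈ 𝒳' then (1:ℝ) else 0) * π a x :=
    (Measurable.ite h𝒳' measurable_const measurable_const).mul (hπmeas a)
  have hraY_int : Integrable (fun ω => ((if X ω ∈ 𝒳' then (1:ℝ) else 0) * π a (X ω)) *
      f (X ω) (A ω) (U ω)) P :=
    my_integrable_of_bdd ((hra_meas.comp hX).mul hYmeas) C
      (fun ω => hbdd_prod (habs_mul habs1 (habsπ a (X ω))) (hfbdd _ _ _))
  have hR3 : ∫ ω, ((if X ω ∈ 𝒳' then (1:ℝ) else 0) * π a (X ω)) * mP (X ω) ∂P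
      = ∫ ω, ((if X ω ∈ 𝒳' then (1:ℝ) else 0) * π a (X ω)) * f (X ω) (A ω) (U ω) ∂P := by
    rw [my_pullout hmX_le P
      (g := fun ω => (if X ω ∈ 𝒳' then (1:ℝ) else 0) * π a (X ω))
      (h := fun ω => f (X ω) (A ω) (U ω))
      (hmXmeas hra_meas) hYint hraY_int]
    refine integral_congr_ae ?_
    filter_upwards [hmP] with ω hω
    rw [hω]
  have hR4 : ∫ ω, ((if X ω ∈ 𝒳' then (1:ℝ) else 0) * π a (X ω)) * f (X ω) (A ω) (U ω) ∂P
      = ∑ b : Fin m, ∫ ω, ((if A ω = b then (1:ℝ) else 0) * π a (X ω)) *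
          ((if X ω ∈ 𝒳' then (1:ℝ) else 0) * f (X ω) b (U ω)) ∂P := by
    have hterm : ∀ b : Fin m, Integrable (fun ω => ((if A ω = b then (1:ℝ) else 0) * π a (X ω)) *
        ((if X ω ∈ 𝒳' then (1:ℝ) else 0) * f (X ω) b (U ω))) P := fun b =>
      my_integrable_of_bdd (((hImeas A hA b).mul ((hπmeas a).comp hX)).mul
        (((Measurable.ite (hX h𝒳') measurable_const measurable_const)).mul (hgmeas b))) C
        (fun ω => hbdd_prod (habs_mul habs1 (habsπ a (X ω)))
          (hbdd_prod habs1 (hfbdd _ _ _)))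
    rw [← integral_finset_sum _ (fun b _ => hterm b)]
    refine integral_congr_ae (Filter.Eventually.of_forall fun ω => ?_)
    have := hsum_pt A ω
    calc ((if X ω ∈ 𝒳' then (1:ℝ) else 0) * π a (X ω)) * f (X ω) (A ω) (U ω)
        = ((if X ω ∈ 𝒳' then (1:ℝ) else 0) * π a (X ω)) *
            ∑ b : Fin m, (if A ω = b then (1:ℝ) else 0) * f (X ω) b (U ω) := by rw [this]
      _ = ∑ b : Fin m, ((if A ω = b then (1:ℝ) else 0) * π a (X ω)) *
            ((if X ω ∈ 𝒳' then (1:ℝ) else 0) * f (X ω) b (U ω)) := by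
          rw [Finset.mul_sum]
          refine Finset.sum_congr rfl fun b _ => ?_
          ring
  -- put everything together
  have hmain : ∫ ω in E, f (X ω) (Astar ω) (U ω) ∂P = ∫ ω in E, mP (X ω) ∂P := by
    rw [hL, hR1, hR2, hR3, hR4]
    exact Finset.sum_congr rfl fun b _ => hMid b
  rw [hmain]
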